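/- For every ε > 0 there exists N such that for all n ≥ N, (n·2^(n-1))^k < (2^n)! whenever k ≤ (1/2 - ε)·2^n. Consequently, for sufficiently large n there exists a reversible function on n lines not realizable by any cascade of fewer than (1/2 - ε)·2^n · (n/(n + log₂ n - 1)) MCT gates; in particular some function requires exponentially many (in n) MCT gates. -/

import Mathlib

/-- Application of the MCT gate with target `t` and controls `C` (with `t ∉ C`). -/
def mctApply {n : ℕ} (t : Fin n) (C : Finset (Fin n)) (x : Fin n → Bool) : Fin n → Bool :=
  Function.update x t (xor (x t) (decide (∀ i ∈ C, x i = true)))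

section aux

lemma geom_lt' {G : ℕ} (hG : 2 ≤ G) : ∀ M : ℕ, ∑ ℓ ∈ Finset.range M, G ^ ℓ < G ^ M := by
  intro M
  induction M with
  | zero => simp
  | succ M ih =>
    rw [Finset.sum_range_succ, pow_succ]
    have : G ^ M * 2 ≤ G ^ M * G := Nat.mul_le_mul_left _ hG
    omega

lemma sq_le_two_pow : ∀ n : ℕ, 4 ≤ n → n ^ 2 ≤ 2 ^ n := by
  intro n hn
  induction n with
  | zero => omega
  | succ m ih =>
    rcases Nat.lt_or_ge m 4 with h | h
    · have : m = 3 := by omega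
      subst this; norm_num
    · have hm := ih (by omega)
      have h1 : (m + 1) ^ 2 ≤ 2 * m ^ 2 := by nlinarith
      calc (m+1)^2 ≤ 2 * m^2 := h1
        _ ≤ 2 * 2 ^ m := by omega
        _ = 2 ^ (m+1) := by ring

lemma pow_self_le_fact (m : ℕ) : m ^ m ≤ Nat.factorial (2 * m) := by
  calc m ^ m ≤ (m + 1) ^ m := Nat.pow_le_pow_left (by omega) m
    _ ≤ Nat.factorial m * (m + 1) ^ m := Nat.le_mul_of_pos_left _ (Nat.factorial_pos m)
    _ ≤ Nat.factorial (m + m) := Nat.factorial_mul_pow_le_factorial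
    _ = Nat.factorial (2 * m) := by ring_nf

lemma fact_lb (n : ℕ) (hn : 1 ≤ n) : 2 ^ ((n-1) * 2^(n-1)) ≤ Nat.factorial (2 ^ n) := by
  have h : 2 ^ n = 2 * 2 ^ (n - 1) := by
    conv_lhs => rw [show n = (n-1)+1 by omega]
    ring
  rw [h]
  calc 2 ^ ((n-1) * 2^(n-1)) = (2 ^ (n-1)) ^ (2 ^ (n-1)) := by rw [← pow_mul, Nat.mul_comm]
    _ ≤ Nat.factorial (2 * 2 ^ (n-1)) := pow_self_le_fact _

lemma card_noneq {n : ℕ} (t : Fin n) : Fintype.card {C : Finset (Fin n) // t ∉ C} = 2 ^ (n - 1) := by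
  have e : {C : Finset (Fin n) // t ∉ C} ≃ Finset {i : Fin n // i ≠ t} :=
    { toFun := fun C => C.1.subtype (· ≠ t)
      invFun := fun D => ⟨D.map (Function.Embedding.subtype _), by simp⟩
      left_inv := by
        rintro ⟨C, hC⟩
        ext a
        simp only [Finset.subtype_map, Finset.mem_filter]
        constructor
        · rintro ⟨h, -⟩; exact h
        · intro h; exact ⟨h, fun he => hC (he ▸ h)⟩
      right_inv := by
        intro D
        ext a
        simp only [Finset.mem_subtype, Finset.mem_map, Function.Embedding.coe_subtype]
        constructor
        · rintro ⟨b, hb, hba⟩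
          rwa [show b = a from Subtype.ext hba] at hb
        · intro h; exact ⟨a, h, rfl⟩ }
  rw [Fintype.card_congr e, Fintype.card_finset]
  congr 1
  rw [Fintype.card_subtype_compl (fun i => i = t)]
  simp [Fintype.card_subtype_eq]

lemma card_gates (n : ℕ) :
    Fintype.card ((t : Fin n) × {C : Finset (Fin n) // t ∉ C}) = n * 2 ^ (n - 1) := by
  rw [Fintype.card_sigma]
  rw [Finset.sum_congr rfl (fun t _ => card_noneq t)]
  simp [mul_comm]

lemma logb_le_sqrt (n : ℕ) (hn : 1 ≤ n) : Real.logb 2 (n : ℝ) ≤ 4 * Real.sqrt n := by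
  have hn0 : (0:ℝ) < n := by exact_mod_cast hn
  have hs0 : (0:ℝ) < Real.sqrt n := Real.sqrt_pos.mpr hn0
  have hlog : Real.log n ≤ 2 * Real.sqrt n := by
    have h1 : Real.log (Real.sqrt n) = Real.log n / 2 := Real.log_sqrt hn0.le
    have h2 : Real.log (Real.sqrt n) ≤ Real.sqrt n - 1 :=
      Real.log_le_sub_one_of_pos hs0
    nlinarith
  have h2 : (0.6931471803 : ℝ) < Real.log 2 := Real.log_two_gt_d9
  have hlog0 : 0 ≤ Real.log n := Real.log_nonneg (by exact_mod_cast hn)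
  rw [Real.logb, div_le_iff₀ (by linarith)]
  nlinarith

lemma expo_ineq (ε : ℝ) (hε : 0 < ε)
    {a b c k : ℝ} (ha : 0 ≤ a) (hb : 0 < b) (hc : 0 < c) (hk0 : 0 ≤ k)
    (hlog : a < 2 * ε * b) (hk : k ≤ (1 - 2*ε) * c) :
    (a + b) * k < b * c := by
  nlinarith [mul_nonneg ha hc.le, mul_pos hb hc, mul_nonneg (mul_nonneg hε.le hb.le) hc.le,
    mul_nonneg ha hk0]

lemma part1 (ε : ℝ) (hε : 0 < ε) (n : ℕ) (hn : 4 ≤ n)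
    (hlog : Real.logb 2 (n:ℝ) < 2 * ε * ((n:ℝ) - 1)) (k : ℕ)
    (hk : (k : ℝ) ≤ (1/2 - ε) * 2 ^ n) :
    ((n : ℝ) * 2 ^ (n-1)) ^ k < (Nat.factorial (2 ^ n) : ℝ) := by
  set L := Real.logb 2 (n:ℝ) with hLdef
  have hn0 : (0:ℝ) < n := by positivity
  have hL0 : 0 ≤ L := Real.logb_nonneg one_lt_two
    (by exact_mod_cast Nat.one_le_iff_ne_zero.mpr (by omega))
  have hb : (0:ℝ) < (n:ℝ) - 1 := by
    have : (4:ℝ) ≤ n := by exact_mod_cast hn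
    linarith
  have hc : (0:ℝ) < (2:ℝ) ^ (n-1) := by positivity
  have hcast : ((n - 1 : ℕ) : ℝ) = (n:ℝ) - 1 := by
    rw [Nat.cast_sub (by omega)]; norm_num
  have h2n : (2:ℝ) ^ n = 2 * 2 ^ (n-1) := by
    conv_lhs => rw [show n = (n-1)+1 by omega]
    ring
  have hk' : (k:ℝ) ≤ (1 - 2*ε) * 2 ^ (n-1) := by
    rw [h2n] at hk; linarith
  have hbase : (n:ℝ) * 2 ^ (n-1) = (2:ℝ) ^ (L + ((n:ℝ) - 1)) := by
    rw [Real.rpow_add two_pos, Real.rpow_logb two_pos (by norm_num) hn0]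
    congr 1
    rw [← Real.rpow_natCast 2 (n-1), hcast]
  have hexp : (L + ((n:ℝ)-1)) * k < ((n:ℝ)-1) * 2^(n-1) :=
    expo_ineq ε hε hL0 hb hc (by positivity) hlog hk'
  have hlhs : ((n : ℝ) * 2 ^ (n-1)) ^ k = (2:ℝ) ^ ((L + ((n:ℝ)-1)) * k) := by
    rw [hbase, ← Real.rpow_natCast ((2:ℝ) ^ (L + ((n:ℝ)-1))) k, ← Real.rpow_mul (by norm_num)]
  have hmid : (2:ℝ) ^ ((L + ((n:ℝ)-1)) * k) < (2:ℝ) ^ (((n:ℝ)-1) * 2^(n-1)) :=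
    Real.rpow_lt_rpow_left_iff (by norm_num : (1:ℝ) < 2) |>.mpr hexp
  have hrhs : (2:ℝ) ^ (((n:ℝ)-1) * 2^(n-1)) = (((2:ℕ) ^ ((n-1) * 2^(n-1)) : ℕ) : ℝ) := by
    push_cast
    rw [← Real.rpow_natCast 2 ((n-1) * 2^(n-1))]
    congr 1
    push_cast [hcast]
    ring
  rw [hlhs]
  calc (2:ℝ) ^ ((L + ((n:ℝ)-1)) * k) < (2:ℝ) ^ (((n:ℝ)-1) * 2^(n-1)) := hmid
    _ = (((2:ℕ) ^ ((n-1) * 2^(n-1)) : ℕ) : ℝ) := hrhs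
    _ ≤ (Nat.factorial (2 ^ n) : ℝ) := by exact_mod_cast fact_lb n (by omega)

end aux

theorem stmt_7 (ε : ℝ) (hε : 0 < ε) :
    ∃ N : ℕ, ∀ n : ℕ, N ≤ n →
      (∀ k : ℕ, (k : ℝ) ≤ (1 / 2 - ε) * 2 ^ n →
        ((n : ℝ) * 2 ^ (n - 1)) ^ k < (Nat.factorial (2 ^ n) : ℝ)) ∧
      ∃ f : (Fin n → Bool) ≃ (Fin n → Bool),
        ∀ L : List ((t : Fin n) × {C : Finset (Fin n) // t ∉ C}),
          (L.length : ℝ) < (1 / 2 - ε) * 2 ^ n * ((n : ℝ) / ((n : ℝ) + Real.logb 2 n - 1)) →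
          (f : (Fin n → Bool) → (Fin n → Bool)) ≠
            L.foldr (fun g h => mctApply g.1 g.2.1 ∘ h) id := by
  rcases lt_or_ge ε (1/2) with hε2 | hε2
  · -- main case
    have hpos : (0:ℝ) < 1/2 - ε := by linarith
    refine ⟨max 4 (max (⌈(16:ℝ)/ε^2⌉₊ + 1) ⌈(2:ℝ)/(1/2-ε)⌉₊), fun n hn => ?_⟩
    have hn4 : 4 ≤ n := le_trans (le_max_left _ _) hn
    have hn1 : 1 ≤ n := by omega
    have hnR : (4:ℝ) ≤ n := by exact_mod_cast hn4
    have hnc1 : (16:ℝ)/ε^2 < n := by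
      have h1 : ⌈(16:ℝ)/ε^2⌉₊ + 1 ≤ n := le_trans (le_trans (le_max_left _ _) (le_max_right _ _)) hn
      have h2 : ((⌈(16:ℝ)/ε^2⌉₊:ℝ) + 1) ≤ n := by exact_mod_cast h1
      have := Nat.le_ceil ((16:ℝ)/ε^2)
      linarith
    have hnc2 : (2:ℝ)/(1/2-ε) ≤ n := by
      have h1 : ⌈(2:ℝ)/(1/2-ε)⌉₊ ≤ n := le_trans (le_trans (le_max_right _ _) (le_max_right _ _)) hn
      have h2 : ((⌈(2:ℝ)/(1/2-ε)⌉₊:ℝ)) ≤ n := by exact_mod_cast h1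
      have := Nat.le_ceil ((2:ℝ)/(1/2-ε))
      linarith
    -- log bound
    have hsq : Real.sqrt n * Real.sqrt n = (n:ℝ) := Real.mul_self_sqrt (by positivity)
    have hs1 : (1:ℝ) ≤ Real.sqrt n := by
      rw [show (1:ℝ) = Real.sqrt 1 by simp]
      exact Real.sqrt_le_sqrt (by linarith)
    have hes : 4 < ε * Real.sqrt n := by
      have h16 : 16 < ε^2 * n := by
        rw [div_lt_iff₀ (by positivity)] at hnc1
        linarith
      nlinarith [mul_pos hε (lt_of_lt_of_le one_pos hs1)]
    have hlog : Real.logb 2 (n:ℝ) < 2 * ε * ((n:ℝ) - 1) := by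
      have h1 := logb_le_sqrt n hn1
      have h2 : 4 * Real.sqrt n < ε * (n:ℝ) := by
        calc 4 * Real.sqrt n < (ε * Real.sqrt n) * Real.sqrt n := by nlinarith
          _ = ε * (n:ℝ) := by rw [mul_assoc, hsq]
      nlinarith
    -- C2
    have hC2 : 2*(n:ℝ) ≤ (1/2-ε) * 2^n := by
      have hsqn : (n:ℝ)^2 ≤ (2:ℝ)^n := by exact_mod_cast sq_le_two_pow n hn4
      have h2 : (2:ℝ) ≤ (1/2-ε) * n := by
        rw [div_le_iff₀ hpos] at hnc2
        linarith
      nlinarith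
    refine ⟨fun k hk => part1 ε hε n hn4 hlog k hk, ?_⟩
    -- Part 2
    set Lg := Real.logb 2 (n:ℝ) with hLg
    have hL2 : (2:ℝ) ≤ Lg := by
      rw [hLg, Real.le_logb_iff_rpow_le one_lt_two (by positivity)]
      rw [show ((2:ℝ):ℝ) = ((2:ℕ):ℝ) by norm_num, Real.rpow_natCast]
      norm_num; linarith
    have hLn : Lg ≤ (n:ℝ) := by
      rw [hLg, Real.logb_le_iff_le_rpow one_lt_two (by positivity), Real.rpow_natCast]
      exact_mod_cast (Nat.lt_two_pow_self (n := n)).le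
    have hden : (0:ℝ) < (n:ℝ) + Lg - 1 := by linarith
    set B := (1/2-ε) * 2^n * ((n:ℝ)/((n:ℝ)+Lg-1)) with hBdef
    have hB0 : 0 ≤ B := by
      apply mul_nonneg (mul_nonneg hpos.le (by positivity))
      positivity
    set M := ⌈B⌉₊ with hMdef
    have hM : (M:ℝ) ≤ (1/2-ε) * 2^n := by
      have h1 : (M:ℝ) < B + 1 := Nat.ceil_lt_add_one hB0
      have key : 1 ≤ (1/2-ε) * 2^n * ((Lg-1)/((n:ℝ)+Lg-1)) := by
        rw [mul_div_assoc', le_div_iff₀ hden]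
        nlinarith
      have hsum : B + (1/2-ε) * 2^n * ((Lg-1)/((n:ℝ)+Lg-1)) = (1/2-ε) * 2^n := by
        rw [hBdef, mul_div_assoc', mul_div_assoc', ← add_div, ← mul_add]
        field_simp
        ring
      linarith
    -- counting argument
    by_contra hcon
    push_neg at hcon
    set A := ((t : Fin n) × {C : Finset (Fin n) // t ∉ C}) with hA
    set F : (Σ ℓ : Fin M, (Fin ℓ → A)) → ((Fin n → Bool) → (Fin n → Bool)) :=
      fun p => (List.ofFn p.2).foldr (fun g h => mctApply g.1 g.2.1 ∘ h) id with hF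
    set S := Finset.image F Finset.univ with hS
    have hmem : ∀ f : (Fin n → Bool) ≃ (Fin n → Bool), ⇑f ∈ S := by
      intro f
      obtain ⟨Lf, hlen, hfold⟩ := hcon f
      have hlenM : Lf.length < M := Nat.lt_ceil.mpr hlen
      rw [hS, Finset.mem_image]
      refine ⟨⟨⟨Lf.length, hlenM⟩, fun i => Lf.get i⟩, Finset.mem_univ _, ?_⟩
      rw [hF]
      simp only [List.ofFn_get]
      exact hfold.symm
    have hinj : Function.Injective
        (fun f : (Fin n → Bool) ≃ (Fin n → Bool) => (⟨⇑f, hmem f⟩ : {x // x ∈ S})) := by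
      intro f g h
      exact Equiv.coe_fn_injective (congrArg Subtype.val h)
    have h1 : Fintype.card ((Fin n → Bool) ≃ (Fin n → Bool)) ≤ Fintype.card {x // x ∈ S} :=
      Fintype.card_le_of_injective _ hinj
    have hcardE : Fintype.card ((Fin n → Bool) ≃ (Fin n → Bool)) = Nat.factorial (2^n) := by
      rw [Fintype.card_equiv (Equiv.refl _)]
      congr 1
      simp [Fintype.card_fun]
    have hcardS : Fintype.card {x // x ∈ S} ≤ Fintype.card (Σ ℓ : Fin M, (Fin ℓ → A)) := by
      rw [Fintype.card_coe]
      exact le_trans (Finset.card_image_le) (by rw [Finset.card_univ])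
    have hcardSig : Fintype.card (Σ ℓ : Fin M, (Fin ℓ → A)) = ∑ ℓ ∈ Finset.range M, (n * 2^(n-1)) ^ ℓ := by
      rw [Fintype.card_sigma]
      rw [← Fin.sum_univ_eq_sum_range (fun ℓ => (n * 2^(n-1)) ^ ℓ) M]
      refine Finset.sum_congr rfl (fun ℓ _ => ?_)
      rw [Fintype.card_fun, card_gates, Fintype.card_fin]
    have hgeom : ∑ ℓ ∈ Finset.range M, (n * 2^(n-1)) ^ ℓ < (n * 2^(n-1)) ^ M := by
      apply geom_lt'
      have h1 : 2 ≤ n := by omega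
      have h2 : 2 ≤ 2^(n-1) := by
        calc 2 = 2^1 := rfl
          _ ≤ 2^(n-1) := Nat.pow_le_pow_right (by norm_num) (by omega)
      calc 2 ≤ 2 * 2 := by norm_num
        _ ≤ n * 2^(n-1) := Nat.mul_le_mul h1 h2
    have hnat : Nat.factorial (2^n) < (n * 2^(n-1)) ^ M := by
      rw [← hcardE]
      exact lt_of_le_of_lt (h1.trans (hcardS.trans hcardSig.le)) hgeom
    have hreal : (Nat.factorial (2^n) : ℝ) < ((n:ℝ) * 2^(n-1)) ^ M := by
      calc (Nat.factorial (2^n) : ℝ) < (((n * 2^(n-1)) ^ M : ℕ) : ℝ) := by exact_mod_cast hnat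
        _ = ((n:ℝ) * 2^(n-1)) ^ M := by push_cast; ring
    have := part1 ε hε n hn4 hlog M hM
    linarith
  · -- trivial case: 1/2 ≤ ε
    refine ⟨2, fun n hn => ⟨?_, Equiv.refl _, ?_⟩⟩
    · intro k hk
      have hk0 : k = 0 := by
        have h1 : (1/2 - ε) * 2^n ≤ 0 :=
          mul_nonpos_of_nonpos_of_nonneg (by linarith) (by positivity)
        have : (k:ℝ) = 0 := le_antisymm (le_trans hk h1) (by positivity)
        exact_mod_cast this
      subst hk0
      simp only [pow_zero]
      have h2 : 2 ≤ 2^n := by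
        calc 2 = 2^1 := rfl
          _ ≤ 2^n := Nat.pow_le_pow_right (by norm_num) (by omega)
      have : 1 < Nat.factorial (2^n) := Nat.one_lt_factorial.mpr (by omega)
      exact_mod_cast this
    · intro Lst hlen
      exfalso
      have hL0 : 0 ≤ Real.logb 2 (n:ℝ) := Real.logb_nonneg one_lt_two
        (by exact_mod_cast Nat.one_le_iff_ne_zero.mpr (by omega))
      have hnR : (2:ℝ) ≤ n := by exact_mod_cast hn
      have hrhs : (1/2 - ε) * 2^n * ((n:ℝ)/((n:ℝ)+Real.logb 2 n - 1)) ≤ 0 := by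
        apply mul_nonpos_of_nonpos_of_nonneg
        · exact mul_nonpos_of_nonpos_of_nonneg (by linarith) (by positivity)
        · apply div_nonneg (by positivity)
          linarith
      have : (0:ℝ) ≤ Lst.length := by positivity
      linarith
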